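/- If a finite projective plane of order q contains a maximal arc of degree d, then d divides q. -/

import Mathlib

open scoped Classical

noncomputable section

namespace MaxArcPlane

open Configuration

variable (P L : Type) [Membership P L]

/-- A maximal arc of degree `d` in a projective plane: a nonempty proper set of
points such that every line meets it in exactly `0` or `d` points. -/
def IsMaximalArc (K : Set P) (d : ℕ) : Prop :=
  K.Nonempty ∧ K ≠ Set.univ ∧
    ∀ l : L, {p : P | p ∈ K ∧ p ∈ l}.ncard = 0 ∨ {p : P | p ∈ K ∧ p ∈ l}.ncard = d

end MaxArcPlane

open Configuration in
/-- Partition a finite set avoiding `x` by the pencil of lines through `x`. -/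
lemma arc_pencil_count {P L : Type} [Membership P L] [Fintype P] [Fintype L]
    [Configuration.ProjectivePlane P L] (K' : Finset P) (x : P) (hx : x ∉ K') :
    K'.card =
      ∑ l ∈ Finset.univ.filter (fun l : L => x ∈ l), (K'.filter (· ∈ l)).card := by
  classical
  have hcover : K' =
      (Finset.univ.filter (fun l : L => x ∈ l)).biUnion (fun l => K'.filter (· ∈ l)) := by
    ext p
    simp only [Finset.mem_biUnion, Finset.mem_filter, Finset.mem_univ, true_and]
    constructor
    · intro hp
      have hpx : p ≠ x := fun h => hx (h ▸ hp)
      exact ⟨HasLines.mkLine hpx, (HasLines.mkLine_ax hpx).2, hp, (HasLines.mkLine_ax hpx).1⟩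
    · rintro ⟨l, -, hp, -⟩; exact hp
  conv_lhs => rw [hcover]
  rw [Finset.card_biUnion]
  intro l₁ h₁ l₂ h₂ hne
  simp only [Finset.coe_filter, Finset.mem_coe, Finset.mem_filter, Finset.mem_univ, true_and, Set.mem_setOf_eq] at h₁ h₂
  rw [Function.onFun, Finset.disjoint_left]
  intro p hp₁ hp₂
  simp only [Finset.mem_filter] at hp₁ hp₂
  rcases Nondegenerate.eq_or_eq (P := P) (L := L) hp₁.2 h₁ hp₂.2 h₂ with h | h
  · exact hx (h ▸ hp₁.1)
  · exact hne h

open Configuration in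
lemma pencil_card {P L : Type} [Membership P L] [Fintype P] [Fintype L]
    [Configuration.ProjectivePlane P L] (x : P) :
    (Finset.univ.filter (fun l : L => x ∈ l)).card =
      Configuration.ProjectivePlane.order P L + 1 := by
  classical
  have := ProjectivePlane.lineCount_eq L x
  rw [lineCount, Nat.card_eq_fintype_card, Fintype.card_subtype] at this
  exact this

/-- if a finite projective plane of order `q` contains a maximal arc of
degree `d`, then `d` divides `q`. -/
theorem statement18 {P L : Type} [Membership P L] [Fintype P] [Fintype L]
    [Configuration.ProjectivePlane P L]
    (K : Set P) (d : ℕ) (hK : MaxArcPlane.IsMaximalArc P L K d) :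
    d ∣ Configuration.ProjectivePlane.order P L := by
  classical
  obtain ⟨⟨y, hy⟩, hne, harc⟩ := hK
  set q := Configuration.ProjectivePlane.order P L with hq
  set KF : Finset P := K.toFinset with hKF
  have hyF : y ∈ KF := Set.mem_toFinset.mpr hy
  -- translate ncard to Finset cards
  have hcard : ∀ l : L, {p : P | p ∈ K ∧ p ∈ l}.ncard = (KF.filter (· ∈ l)).card := by
    intro l
    rw [Set.ncard_eq_toFinset_card']
    congr 1
    ext p
    simp [hKF, Set.mem_toFinset]
  -- every line through a point of K meets K in exactly d points
  have hthru : ∀ l : L, y ∈ l → (KF.filter (· ∈ l)).card = d := by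
    intro l hyl
    rcases harc l with h | h
    · rw [hcard] at h
      exfalso
      have hmem : y ∈ KF.filter (· ∈ l) := Finset.mem_filter.mpr ⟨hyF, hyl⟩
      rw [Finset.card_eq_zero.mp h] at hmem
      exact Finset.notMem_empty y hmem
    · rw [hcard] at h; exact h
  have hd1 : 1 ≤ d := by
    obtain ⟨l, hl⟩ : ∃ l : L, y ∈ l := by
      have h := pencil_card (L := L) y
      have hpos : (Finset.univ.filter (fun l : L => y ∈ l)).Nonempty := by
        rw [← Finset.card_pos, h]; omega
      obtain ⟨l, hl⟩ := hpos
      exact ⟨l, (Finset.mem_filter.mp hl).2⟩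
    have h1 := hthru l hl
    have h2 : y ∈ KF.filter (· ∈ l) := Finset.mem_filter.mpr ⟨hyF, hl⟩
    have := Finset.card_pos.mpr ⟨y, h2⟩
    omega
  -- count |K| via lines through y ∈ K
  have hKy : (KF.erase y).card = (q + 1) * (d - 1) := by
    rw [arc_pencil_count (L := L) (KF.erase y) y (Finset.notMem_erase y KF)]
    rw [Finset.sum_congr rfl (fun l hl => ?_), Finset.sum_const, pencil_card, smul_eq_mul]
    have hyl : y ∈ l := (Finset.mem_filter.mp hl).2
    have heq : (KF.erase y).filter (· ∈ l) = (KF.filter (· ∈ l)).erase y := by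
      ext p
      simp only [Finset.mem_filter, Finset.mem_erase]
      tauto
    rw [heq, Finset.card_erase_of_mem (Finset.mem_filter.mpr ⟨hyF, hyl⟩), hthru l hyl]
  have hKcard : KF.card = (q + 1) * (d - 1) + 1 := by
    rw [← Finset.card_erase_add_one hyF, hKy]
  -- d divides |K| via lines through a point not in K
  obtain ⟨x, hx⟩ : ∃ x, x ∉ K := by
    by_contra h
    push_neg at h
    exact hne (Set.eq_univ_of_forall h)
  have hdvd : d ∣ KF.card := by
    rw [arc_pencil_count (L := L) KF x (by simpa [hKF, Set.mem_toFinset] using hx)]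
    refine Finset.dvd_sum (fun l hl => ?_)
    rcases harc l with h | h <;> rw [hcard] at h <;> rw [h]
    exact dvd_zero d
  rw [hKcard] at hdvd
  obtain ⟨e, rfl⟩ : ∃ e, d = e + 1 := ⟨d - 1, by omega⟩
  have key : (q + 1) * (e + 1) = ((q + 1) * (e + 1 - 1) + 1) + q := by
    simp only [Nat.add_sub_cancel]; ring
  have hdq : (e + 1) ∣ ((q + 1) * (e + 1 - 1) + 1) + q := key ▸ Dvd.intro (q + 1) (by ring)
  exact (Nat.dvd_add_right hdvd).mp hdq
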